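/- For every integer m > 1 and every n₀ ∈ ℕ, in the random uniform attachment graph process with degree cap d = 2m, the probability that every vertex of {1,…,n₀} has degree exactly d in G_n tends to 1 as n → ∞. -/

import Mathlib

open Finset MeasureTheory Filter Topology FirstOrder
open scoped ENNReal

noncomputable section

open scoped Classical

/-- The degree of vertex `v` in the graph `g`, counting neighbors among `{1, …, n}`. -/
def degIn (g : SimpleGraph ℕ) (n v : ℕ) : ℕ :=
  ((Finset.Icc 1 n).filter fun u => g.Adj v u).card

/-- The set of neighbors of vertex `v` in the graph `g` among `{1, …, n}`. -/
def nbrsIn (g : SimpleGraph ℕ) (n v : ℕ) : Finset ℕ :=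
  (Finset.Icc 1 n).filter fun u => g.Adj v u

/-- `g'` is obtained from `g` (a graph on `{1,…,n}`) by one admissible uniform-attachment
step with parameter `m` and degree cap `d = 2m`: the new vertex `n+1` is joined to `m`
distinct vertices of `{1,…,n}`, each of degree `< 2m` in `g`; adjacencies among the other
vertices are unchanged, and all edges of `g'` stay inside `{1,…,n+1}`. -/
def IsUAStep (m n : ℕ) (g g' : SimpleGraph ℕ) : Prop :=
  (∀ u v, g'.Adj u v → u ∈ Finset.Icc 1 (n+1) ∧ v ∈ Finset.Icc 1 (n+1)) ∧
  (∀ u v, u ≠ n+1 → v ≠ n+1 → (g'.Adj u v ↔ g.Adj u v)) ∧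
  (nbrsIn g' (n+1) (n+1)).card = m ∧
  (∀ u, g'.Adj (n+1) u → u ∈ Finset.Icc 1 n ∧ degIn g n u < 2*m)

/-- The complete graph on the vertex set `{1, …, k}` (as a graph on `ℕ`). -/
def completeOn (k : ℕ) : SimpleGraph ℕ :=
  SimpleGraph.fromRel (fun u v => u ∈ Finset.Icc 1 k ∧ v ∈ Finset.Icc 1 k)

/-- `N(g)`: the number of `m`-element sets of vertices of degree `< 2m` of a graph `g`
on `{1,…,n}`. -/
def numOpenSets (m n : ℕ) (g : SimpleGraph ℕ) : ℕ :=
  (((Finset.Icc 1 n).filter fun v => degIn g n v < 2*m).card).choose m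

/-- The random uniform attachment graph process with parameter `m` (degree cap `d = 2m`),
modeled by random variables `G n` (for `n ≥ m+1`) on a probability space `(Ω, P)` taking
values in simple graphs on `{1,…,n}`: `G (m+1)` is a.s. the complete graph on `{1,…,m+1}`;
a.s. each `G (n+1)` is obtained from `G n` by an admissible uniform attachment step; and
for every graph `g` on `{1,…,n}` and every `m`-element set `S` of vertices of degree `< 2m`
of `g`, `P(G n = g and the neighborhood of n+1 in G (n+1) equals S) = P(G n = g) / N(g)`. -/
structure UAProcess (m : ℕ) {Ω : Type} [MeasurableSpace Ω] (P : Measure Ω) where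
  G : ℕ → Ω → SimpleGraph ℕ
  meas : ∀ n H, MeasurableSet {ω | G n ω = H}
  init : P {ω | G (m+1) ω = completeOn (m+1)} = 1
  stepAdm : ∀ n, m+1 ≤ n → P {ω | IsUAStep m n (G n ω) (G (n+1) ω)} = 1
  stepUnif : ∀ n, m+1 ≤ n → ∀ g : SimpleGraph ℕ,
    (∀ u v, g.Adj u v → u ∈ Finset.Icc 1 n ∧ v ∈ Finset.Icc 1 n) →
    ∀ S : Finset ℕ, S.card = m →
    (∀ v ∈ S, v ∈ Finset.Icc 1 n ∧ degIn g n v < 2*m) →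
    P {ω | G n ω = g ∧ nbrsIn (G (n+1) ω) (n+1) (n+1) = S} =
      P {ω | G n ω = g} / (numOpenSets m n g : ℝ≥0∞)

/-! ### Deterministic layer -/

/-- `g` is supported on `{1,…,n}`. -/
def Supp (n : ℕ) (g : SimpleGraph ℕ) : Prop :=
  ∀ u v, g.Adj u v → u ∈ Finset.Icc 1 n ∧ v ∈ Finset.Icc 1 n

/-- open vertices of `g` among `{1,…,n}` -/
def openFin (m n : ℕ) (g : SimpleGraph ℕ) : Finset ℕ :=
  (Finset.Icc 1 n).filter fun v => degIn g n v < 2*m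

lemma numOpenSets_eq (m n : ℕ) (g : SimpleGraph ℕ) :
    numOpenSets m n g = ((openFin m n g).card).choose m := rfl

lemma mem_openFin {m n : ℕ} {g : SimpleGraph ℕ} {v : ℕ} :
    v ∈ openFin m n g ↔ v ∈ Finset.Icc 1 n ∧ degIn g n v < 2*m := by
  simp [openFin]

/-- Attach new vertex `n+1` to the set `S`. -/
def addStar (n : ℕ) (g : SimpleGraph ℕ) (S : Finset ℕ) : SimpleGraph ℕ where
  Adj u v := u ≠ v ∧ (g.Adj u v ∨ (u = n+1 ∧ v ∈ S) ∨ (v = n+1 ∧ u ∈ S))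
  symm := ⟨by
    rintro u v ⟨h1, h2⟩
    refine ⟨fun h => h1 h.symm, ?_⟩
    rcases h2 with h | h | h
    · exact Or.inl h.symm
    · exact Or.inr (Or.inr h)
    · exact Or.inr (Or.inl h)⟩
  loopless := ⟨fun v h => h.1 rfl⟩

lemma addStar_adj {n : ℕ} {g : SimpleGraph ℕ} {S : Finset ℕ} {u v : ℕ} :
    (addStar n g S).Adj u v ↔
      u ≠ v ∧ (g.Adj u v ∨ (u = n+1 ∧ v ∈ S) ∨ (v = n+1 ∧ u ∈ S)) := Iff.rfl

lemma not_mem_Icc_succ (n : ℕ) : (n+1) ∉ Finset.Icc 1 n := by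
  simp [Finset.mem_Icc]

lemma Icc_succ_eq (n : ℕ) : Finset.Icc 1 (n+1) = insert (n+1) (Finset.Icc 1 n) := by
  ext u; simp [Finset.mem_Icc, Finset.mem_insert]; omega

lemma addStar_adj_low {n : ℕ} {g : SimpleGraph ℕ} {S : Finset ℕ} (hg : Supp n g)
    {u v : ℕ} (hu : u ∈ Finset.Icc 1 n) (hv : v ∈ Finset.Icc 1 n) :
    ((addStar n g S).Adj u v ↔ g.Adj u v) := by
  have hu' := Finset.mem_Icc.mp hu
  have hv' := Finset.mem_Icc.mp hv
  constructor
  · rintro ⟨h1, h | h | h⟩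
    · exact h
    · omega
    · omega
  · intro h; exact ⟨g.ne_of_adj h, Or.inl h⟩

lemma addStar_adj_top {n : ℕ} {g : SimpleGraph ℕ} {S : Finset ℕ} (hg : Supp n g)
    (hS : S ⊆ Finset.Icc 1 n) {v : ℕ} :
    ((addStar n g S).Adj (n+1) v ↔ v ∈ S) := by
  constructor
  · rintro ⟨h1, h | h | h⟩
    · have := Finset.mem_Icc.mp (hg _ _ h).1; omega
    · exact h.2
    · exfalso; have := Finset.mem_Icc.mp (hS h.2); omega
  · intro h
    have := Finset.mem_Icc.mp (hS h)
    exact ⟨by omega, Or.inr (Or.inl ⟨rfl, h⟩)⟩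

lemma supp_addStar {n : ℕ} {g : SimpleGraph ℕ} {S : Finset ℕ} (hg : Supp n g)
    (hS : S ⊆ Finset.Icc 1 n) : Supp (n+1) (addStar n g S) := by
  have key : ∀ u v, (addStar n g S).Adj u v → u ∈ Finset.Icc 1 (n+1) := by
    rintro u v ⟨h1, h | h | h⟩
    · have := Finset.mem_Icc.mp (hg _ _ h).1; simp [Finset.mem_Icc]; omega
    · simp [Finset.mem_Icc, h.1]
    · have := Finset.mem_Icc.mp (hS h.2); simp [Finset.mem_Icc]; omega
  exact fun u v h => ⟨key u v h, key v u ((addStar n g S).adj_symm h)⟩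

lemma degIn_addStar_old {m n : ℕ} {g : SimpleGraph ℕ} {S : Finset ℕ} (hg : Supp n g)
    (hS : S ⊆ openFin m n g) {v : ℕ} (hv : v ∈ Finset.Icc 1 n) :
    degIn (addStar n g S) (n+1) v = degIn g n v + (if v ∈ S then 1 else 0) := by
  have hS' : S ⊆ Finset.Icc 1 n := fun x hx => (mem_openFin.mp (hS hx)).1
  have hfil : (Finset.Icc 1 n).filter (fun u => (addStar n g S).Adj v u)
      = (Finset.Icc 1 n).filter (fun u => g.Adj v u) := by
    apply Finset.filter_congr
    intro u hu
    exact addStar_adj_low hg hv hu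
  have hvtop : ((addStar n g S).Adj v (n+1) ↔ v ∈ S) := by
    constructor
    · intro h; exact (addStar_adj_top hg hS' (v := v)).mp ((addStar n g S).adj_symm h)
    · intro h; exact (addStar n g S).adj_symm ((addStar_adj_top hg hS' (v := v)).mpr h)
  rw [degIn, Icc_succ_eq, Finset.filter_insert]
  by_cases hmem : v ∈ S
  · rw [if_pos (hvtop.mpr hmem), Finset.card_insert_of_notMem
      (fun h => not_mem_Icc_succ n (Finset.mem_of_mem_filter _ h)), hfil, if_pos hmem, degIn]
  · rw [if_neg (fun h => hmem (hvtop.mp h)), hfil, if_neg hmem, degIn, Nat.add_zero]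

lemma degIn_addStar_new {m n : ℕ} {g : SimpleGraph ℕ} {S : Finset ℕ} (hg : Supp n g)
    (hS : S ⊆ openFin m n g) :
    degIn (addStar n g S) (n+1) (n+1) = S.card := by
  have hS' : S ⊆ Finset.Icc 1 n := fun x hx => (mem_openFin.mp (hS hx)).1
  rw [degIn]
  congr 1
  ext u
  simp only [Finset.mem_filter]
  constructor
  · rintro ⟨hu, hadj⟩; exact (addStar_adj_top hg hS').mp hadj
  · intro hu
    have := Finset.mem_Icc.mp (hS' hu)
    exact ⟨by simp [Finset.mem_Icc]; omega, (addStar_adj_top hg hS').mpr hu⟩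

/-! ### Invariants -/

/-- Invariant for reachable graphs at time `n`. -/
def UAInv (m n : ℕ) (g : SimpleGraph ℕ) : Prop :=
  Supp n g ∧ (∀ v ∈ Finset.Icc 1 n, m ≤ degIn g n v ∧ degIn g n v ≤ 2*m) ∧
  (∑ v ∈ Finset.Icc 1 n, (2*m - degIn g n v)) = m*(m+1)

lemma completeOn_adj {k u v : ℕ} :
    (completeOn k).Adj u v ↔ u ≠ v ∧ u ∈ Finset.Icc 1 k ∧ v ∈ Finset.Icc 1 k := by
  simp only [completeOn, SimpleGraph.fromRel_adj]
  tauto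

lemma degIn_completeOn {k v : ℕ} (hv : v ∈ Finset.Icc 1 k) :
    degIn (completeOn k) k v = k - 1 := by
  have : (Finset.Icc 1 k).filter (fun u => (completeOn k).Adj v u) = (Finset.Icc 1 k).erase v := by
    ext u
    simp only [Finset.mem_filter, Finset.mem_erase, completeOn_adj]
    constructor
    · rintro ⟨hu, hne, -, -⟩; exact ⟨fun h => hne h.symm, hu⟩
    · rintro ⟨hne, hu⟩; exact ⟨hu, fun h => hne h.symm, hv, hu⟩
  rw [degIn, this, Finset.card_erase_of_mem hv, Nat.card_Icc]
  omega

lemma inv_completeOn {m : ℕ} (hm : 1 ≤ m) : UAInv m (m+1) (completeOn (m+1)) := by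
  refine ⟨fun u v h => ⟨(completeOn_adj.mp h).2.1, (completeOn_adj.mp h).2.2⟩, ?_, ?_⟩
  · intro v hv
    rw [degIn_completeOn hv]
    omega
  · have h1 : ∀ v ∈ Finset.Icc 1 (m+1), 2*m - degIn (completeOn (m+1)) (m+1) v = m := by
      intro v hv; rw [degIn_completeOn hv]; omega
    rw [Finset.sum_congr rfl h1, Finset.sum_const, Nat.card_Icc, smul_eq_mul,
      Nat.add_sub_cancel]
    ring

lemma inv_addStar {m n : ℕ} {g : SimpleGraph ℕ} {S : Finset ℕ} (hm : 1 ≤ m)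
    (h : UAInv m n g) (hS : S ∈ Finset.powersetCard m (openFin m n g)) :
    UAInv m (n+1) (addStar n g S) := by
  obtain ⟨hsupp, hdeg, hdefi⟩ := h
  obtain ⟨hSsub, hScard⟩ := Finset.mem_powersetCard.mp hS
  have hS' : S ⊆ Finset.Icc 1 n := fun x hx => (mem_openFin.mp (hSsub hx)).1
  have hnew : degIn (addStar n g S) (n+1) (n+1) = m := by
    rw [degIn_addStar_new hsupp hSsub, hScard]
  have hold : ∀ v ∈ Finset.Icc 1 n,
      degIn (addStar n g S) (n+1) v = degIn g n v + (if v ∈ S then 1 else 0) :=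
    fun v hv => degIn_addStar_old hsupp hSsub hv
  refine ⟨supp_addStar hsupp hS', ?_, ?_⟩
  · intro v hv
    rcases Finset.mem_insert.mp ((Icc_succ_eq n) ▸ hv) with h | h
    · subst h; rw [hnew]; omega
    · rw [hold v h]
      have h1 := hdeg v h
      by_cases hvS : v ∈ S
      · have := (mem_openFin.mp (hSsub hvS)).2
        simp [hvS]; omega
      · simp [hvS]; omega
  · rw [Icc_succ_eq, Finset.sum_insert (not_mem_Icc_succ n), hnew]
    have key : (∑ v ∈ Finset.Icc 1 n, (2*m - degIn (addStar n g S) (n+1) v))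
        + (∑ v ∈ Finset.Icc 1 n, (if v ∈ S then 1 else 0))
        = ∑ v ∈ Finset.Icc 1 n, (2*m - degIn g n v) := by
      rw [← Finset.sum_add_distrib]
      apply Finset.sum_congr rfl
      intro v hv
      rw [hold v hv]
      have h1 := hdeg v hv
      by_cases hvS : v ∈ S
      · have := (mem_openFin.mp (hSsub hvS)).2
        simp only [if_pos hvS]
        omega
      · simp only [if_neg hvS]
        omega
    have hsum : (∑ v ∈ Finset.Icc 1 n, (if v ∈ S then 1 else 0)) = m := by
      rw [Finset.sum_ite_mem, Finset.inter_eq_right.mpr hS', Finset.sum_const, smul_eq_mul,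
        hScard, Nat.mul_one]
    rw [hsum] at key
    rw [hdefi] at key
    omega

/-- bounds on the number of open vertices -/
lemma openFin_card_bounds {m n : ℕ} {g : SimpleGraph ℕ} (hm : 1 ≤ m) (h : UAInv m n g) :
    m + 1 ≤ (openFin m n g).card ∧ (openFin m n g).card ≤ m*(m+1) := by
  obtain ⟨-, hdeg, hdefi⟩ := h
  have hsplit := Finset.sum_filter_add_sum_filter_not (Finset.Icc 1 n)
    (fun v => degIn g n v < 2*m) (fun v => 2*m - degIn g n v)
  have hzero : (∑ v ∈ (Finset.Icc 1 n).filter (fun v => ¬ degIn g n v < 2*m),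
      (2*m - degIn g n v)) = 0 := by
    apply Finset.sum_eq_zero
    intro v hv
    have := Finset.mem_filter.mp hv
    omega
  have hopen : (∑ v ∈ openFin m n g, (2*m - degIn g n v)) = m*(m+1) := by
    rw [← hdefi, ← hsplit, hzero, Nat.add_zero]; rfl
  constructor
  · -- each term ≤ m since deg ≥ m
    have hub : (∑ v ∈ openFin m n g, (2*m - degIn g n v)) ≤ (openFin m n g).card * m := by
      have := Finset.sum_le_card_nsmul (openFin m n g) (fun v => 2*m - degIn g n v) m
        (fun v hv => by
          have h2 := (hdeg v (mem_openFin.mp hv).1).1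
          show 2*m - degIn g n v ≤ m
          omega)
      simpa [smul_eq_mul] using this
    have : (m+1) * m ≤ (openFin m n g).card * m := by
      calc (m+1) * m = m * (m+1) := by ring
      _ = _ := hopen.symm
      _ ≤ _ := hub
    exact Nat.le_of_mul_le_mul_right this (by omega)
  · -- each term ≥ 1
    have hlb : (openFin m n g).card ≤ ∑ v ∈ openFin m n g, (2*m - degIn g n v) := by
      have := Finset.card_nsmul_le_sum (openFin m n g) (fun v => 2*m - degIn g n v) 1
        (fun v hv => by
          have := (mem_openFin.mp hv).2
          show 1 ≤ 2*m - degIn g n v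
          omega)
      simpa using this
    omega

/-! ### Step characterization -/

lemma step_char {m n : ℕ} {g g' : SimpleGraph ℕ} (hg : Supp n g)
    (h : IsUAStep m n g g') :
    (nbrsIn g' (n+1) (n+1)) ∈ Finset.powersetCard m (openFin m n g) ∧
    g' = addStar n g (nbrsIn g' (n+1) (n+1)) := by
  obtain ⟨h1, h2, h3, h4⟩ := h
  set S := nbrsIn g' (n+1) (n+1) with hSdef
  have hmemS : ∀ u, u ∈ S ↔ g'.Adj (n+1) u := by
    intro u
    simp only [hSdef, nbrsIn, Finset.mem_filter]
    constructor
    · exact fun h => h.2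
    · intro h
      have := Finset.mem_Icc.mp (h4 u h).1
      exact ⟨Finset.mem_Icc.mpr (by omega), h⟩
  have hSopen : S ⊆ openFin m n g := by
    intro u hu
    have := h4 u ((hmemS u).mp hu)
    exact mem_openFin.mpr this
  have hSIcc : S ⊆ Finset.Icc 1 n := fun u hu => (mem_openFin.mp (hSopen hu)).1
  refine ⟨Finset.mem_powersetCard.mpr ⟨hSopen, h3⟩, ?_⟩
  ext u v
  by_cases hu : u = n+1 <;> by_cases hv : v = n+1
  · subst hu; subst hv
    simp [addStar_adj]
  · subst hu
    rw [addStar_adj_top hg hSIcc]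
    exact (hmemS v).symm
  · subst hv
    constructor
    · intro h
      exact (addStar n g S).adj_symm ((addStar_adj_top hg hSIcc).mpr ((hmemS u).mpr (g'.adj_symm h)))
    · intro h
      exact g'.adj_symm ((hmemS u).mp ((addStar_adj_top hg hSIcc).mp ((addStar n g S).adj_symm h)))
  · rw [h2 u v hu hv]
    constructor
    · intro h
      by_cases hu' : u ∈ Finset.Icc 1 n
      · by_cases hv' : v ∈ Finset.Icc 1 n
        · exact (addStar_adj_low hg hu' hv').mpr h
        · exfalso
          have := Finset.mem_Icc.mp (hg u v h).2; apply hv'; exact Finset.mem_Icc.mpr this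
      · exfalso
        have := Finset.mem_Icc.mp (hg u v h).1; apply hu'; exact Finset.mem_Icc.mpr this
    · rintro ⟨hne, hadj | hst | hst⟩
      · exact hadj
      · exact absurd hst.1 hu
      · exact absurd hst.1 hv

/-- injectivity of `S` in `addStar` -/
lemma addStar_inj {n : ℕ} {g : SimpleGraph ℕ} {S : Finset ℕ} (hg : Supp n g)
    (hS : S ⊆ Finset.Icc 1 n) :
    nbrsIn (addStar n g S) (n+1) (n+1) = S := by
  ext u
  simp only [nbrsIn, Finset.mem_filter]
  constructor
  · rintro ⟨-, h⟩
    exact (addStar_adj_top hg hS).mp h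
  · intro h
    have := Finset.mem_Icc.mp (hS h)
    exact ⟨Finset.mem_Icc.mpr (by omega), (addStar_adj_top hg hS).mpr h⟩

/-! ### Counting -/

lemma card_filter_mem_powersetCard {m : ℕ} (hm : 1 ≤ m) (u : Finset ℕ) {v₀ : ℕ}
    (hv : v₀ ∈ u) :
    ((u.powersetCard m).filter (fun S => v₀ ∈ S)).card
      = ((u.card - 1).choose (m-1)) := by
  rw [← Finset.card_erase_of_mem hv, ← Finset.card_powersetCard (m-1) (u.erase v₀)]
  apply Finset.card_bij (fun S _ => S.erase v₀)
  · intro S hS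
    obtain ⟨hS1, hS2⟩ := Finset.mem_filter.mp hS
    obtain ⟨hsub, hcard⟩ := Finset.mem_powersetCard.mp hS1
    exact Finset.mem_powersetCard.mpr ⟨Finset.erase_subset_erase _ hsub,
      by rw [Finset.card_erase_of_mem hS2, hcard]⟩
  · intro S₁ hS₁ S₂ hS₂ h
    have h₁ := (Finset.mem_filter.mp hS₁).2
    have h₂ := (Finset.mem_filter.mp hS₂).2
    rw [← Finset.insert_erase h₁, ← Finset.insert_erase h₂, h]
  · intro T hT
    obtain ⟨hsub, hcard⟩ := Finset.mem_powersetCard.mp hT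
    refine ⟨insert v₀ T, ?_, ?_⟩
    · have hvT : v₀ ∉ T := fun h => (Finset.mem_erase.mp (hsub h)).1 rfl
      refine Finset.mem_filter.mpr ⟨Finset.mem_powersetCard.mpr ⟨?_, ?_⟩, Finset.mem_insert_self _ _⟩
      · intro x hx
        rcases Finset.mem_insert.mp hx with h | h
        · subst h; exact hv
        · exact Finset.mem_of_mem_erase (hsub h)
      · rw [Finset.card_insert_of_notMem hvT, hcard]; omega
    · rw [Finset.erase_insert (fun h => (Finset.mem_erase.mp (hsub h)).1 rfl)]

lemma choose_le {m K : ℕ} (hm : 1 ≤ m) (hK1 : m ≤ K) (hK2 : K ≤ m*(m+1)) :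
    K.choose m ≤ (m+1) * ((K-1).choose (m-1)) := by
  have h := Nat.add_one_mul_choose_eq (K-1) (m-1)
  have e1 : (K-1)+1 = K := by omega
  have e2 : (m-1)+1 = m := by omega
  rw [e1, e2] at h
  -- h : K * (K-1).choose (m-1) = K.choose m * m
  have : K.choose m * m ≤ ((m+1) * ((K-1).choose (m-1))) * m := by
    rw [← h]
    calc K * (K-1).choose (m-1) ≤ (m*(m+1)) * (K-1).choose (m-1) :=
          Nat.mul_le_mul_right _ hK2
    _ = ((m+1) * ((K-1).choose (m-1))) * m := by ring
  exact Nat.le_of_mul_le_mul_right this (by omega)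

/-! ### Reachable graphs -/

def Rch (m : ℕ) : ℕ → Finset (SimpleGraph ℕ)
  | 0 => {completeOn (m+1)}
  | (k+1) => (Rch m k).biUnion fun g =>
      (Finset.powersetCard m (openFin m (m+1+k) g)).image (addStar (m+1+k) g)

lemma inv_Rch {m : ℕ} (hm : 1 ≤ m) : ∀ k, ∀ g ∈ Rch m k, UAInv m (m+1+k) g := by
  intro k
  induction k with
  | zero =>
    intro g hg
    rw [Rch, Finset.mem_singleton] at hg
    subst hg
    exact inv_completeOn hm
  | succ k ih =>
    intro g' hg'
    rw [Rch, Finset.mem_biUnion] at hg'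
    obtain ⟨g, hg, hmem⟩ := hg'
    obtain ⟨S, hS, rfl⟩ := Finset.mem_image.mp hmem
    have : m+1+(k+1) = (m+1+k)+1 := by omega
    rw [this]
    exact inv_addStar hm (ih g hg) hS

/-! ### Local deficiency -/

def fdef (m n₀ n : ℕ) (g : SimpleGraph ℕ) : ℕ :=
  ∑ v ∈ Finset.Icc 1 n₀, (2*m - degIn g n v)

def Qop (m n₀ n : ℕ) (g : SimpleGraph ℕ) : Prop :=
  ∃ v ∈ Finset.Icc 1 n₀, degIn g n v < 2*m

lemma fdef_le (m n₀ n : ℕ) (g : SimpleGraph ℕ) : fdef m n₀ n g ≤ n₀ * (2*m) := by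
  have := Finset.sum_le_card_nsmul (Finset.Icc 1 n₀) (fun v => 2*m - degIn g n v) (2*m)
    (fun v _ => by show 2*m - degIn g n v ≤ 2*m; omega)
  rw [Nat.card_Icc] at this
  simpa [fdef, smul_eq_mul] using this

lemma Icc_n₀_subset {n₀ n : ℕ} (h : n₀ ≤ n) : Finset.Icc 1 n₀ ⊆ Finset.Icc 1 n :=
  Finset.Icc_subset_Icc_right h

lemma fdef_step {m n₀ n : ℕ} {g : SimpleGraph ℕ} {S : Finset ℕ} (hn₀ : n₀ ≤ n)
    (hg : Supp n g) (hS : S ∈ Finset.powersetCard m (openFin m n g))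
    {v₀ : ℕ} (hv₀ : v₀ ∈ Finset.Icc 1 n₀) :
    fdef m n₀ (n+1) (addStar n g S) + (if v₀ ∈ S then 1 else 0) ≤ fdef m n₀ n g := by
  obtain ⟨hSsub, hScard⟩ := Finset.mem_powersetCard.mp hS
  have key : fdef m n₀ (n+1) (addStar n g S)
      + (∑ v ∈ Finset.Icc 1 n₀, (if v ∈ S then 1 else 0)) = fdef m n₀ n g := by
    rw [fdef, fdef, ← Finset.sum_add_distrib]
    apply Finset.sum_congr rfl
    intro v hv
    have hv' : v ∈ Finset.Icc 1 n := Icc_n₀_subset hn₀ hv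
    rw [degIn_addStar_old hg hSsub hv']
    by_cases hvS : v ∈ S
    · have := (mem_openFin.mp (hSsub hvS)).2
      simp only [if_pos hvS]; omega
    · simp only [if_neg hvS]; omega
  have hle : (if v₀ ∈ S then 1 else 0) ≤ ∑ v ∈ Finset.Icc 1 n₀, (if v ∈ S then 1 else 0) :=
    Finset.single_le_sum (f := fun v => if v ∈ S then 1 else 0) (fun _ _ => Nat.zero_le _) hv₀
  omega

lemma Qop_back {m n₀ n : ℕ} {g : SimpleGraph ℕ} {S : Finset ℕ} (hn₀ : n₀ ≤ n)
    (hg : Supp n g) (hS : S ∈ Finset.powersetCard m (openFin m n g))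
    (h : Qop m n₀ (n+1) (addStar n g S)) : Qop m n₀ n g := by
  obtain ⟨hSsub, -⟩ := Finset.mem_powersetCard.mp hS
  obtain ⟨v, hv, hdeg⟩ := h
  refine ⟨v, hv, ?_⟩
  rw [degIn_addStar_old hg hSsub (Icc_n₀_subset hn₀ hv)] at hdeg
  omega

lemma fdef_closed_zero {m n₀ n : ℕ} {g : SimpleGraph ℕ} {S : Finset ℕ} (hn₀ : n₀ ≤ n)
    (hinv : UAInv m n g) (hS : S ∈ Finset.powersetCard m (openFin m n g))
    (h : ¬ Qop m n₀ n g) : fdef m n₀ (n+1) (addStar n g S) = 0 := by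
  obtain ⟨hSsub, -⟩ := Finset.mem_powersetCard.mp hS
  rw [Qop] at h
  push_neg at h
  apply Finset.sum_eq_zero
  intro v hv
  have hv' : v ∈ Finset.Icc 1 n := Icc_n₀_subset hn₀ hv
  have h1 := (hinv.2.1 v hv').2
  have h2 := h v hv
  have hvS : v ∉ S := fun hmem => by
    have := (mem_openFin.mp (hSsub hmem)).2; omega
  rw [degIn_addStar_old hinv.1 hSsub hv', if_neg hvS]
  omega

/-! ### Measure layer -/

section MeasureLayer

variable {Ω : Type} [MeasurableSpace Ω]

lemma meas_inter_one (P : Measure Ω) [IsProbabilityMeasure P] {A E : Set Ω}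
    (hA : MeasurableSet A) (hE : P E = 1) : P (A ∩ E) = P A := by
  refine le_antisymm (measure_mono Set.inter_subset_left) ?_
  obtain ⟨H, hsub, hHm, hH⟩ := MeasureTheory.exists_measurable_superset P (A ∩ E)
  have hdiff : P (A \ H) = 0 := by
    have hsubE : A \ H ⊆ Eᶜ := fun ω hω hEω => hω.2 (hsub ⟨hω.1, hEω⟩)
    have h1 : (1:ℝ≥0∞) ≤ P ((A \ H)ᶜ) := hE ▸ measure_mono (Set.subset_compl_comm.mp hsubE)
    rw [prob_compl_eq_one_sub (hA.diff hHm)] at h1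
    by_contra hx0
    exact absurd h1 (not_le.mpr (ENNReal.sub_lt_self ENNReal.one_ne_top one_ne_zero hx0))
  calc P A ≤ P (A ∩ H) + P (A \ H) := measure_le_inter_add_diff P A H
  _ = P (A ∩ H) := by rw [hdiff, add_zero]
  _ ≤ P H := measure_mono Set.inter_subset_right
  _ = P (A ∩ E) := hH

variable {m : ℕ} {P : Measure Ω} [IsProbabilityMeasure P]

lemma Rch_event_eq (X : UAProcess m P) (k : ℕ) :
    {ω | X.G (m+1+k) ω ∈ Rch m k} = ⋃ g ∈ Rch m k, {ω | X.G (m+1+k) ω = g} := by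
  ext ω; simp

lemma Rch_event_meas (X : UAProcess m P) (k : ℕ) :
    MeasurableSet {ω | X.G (m+1+k) ω ∈ Rch m k} := by
  rw [Rch_event_eq]
  exact (Rch m k).measurableSet_biUnion (fun g _ => X.meas _ g)

lemma prob_Rch (hm : 1 ≤ m) (X : UAProcess m P) (k : ℕ) :
    P {ω | X.G (m+1+k) ω ∈ Rch m k} = 1 := by
  induction k with
  | zero =>
    refine le_antisymm prob_le_one ?_
    rw [← X.init]
    apply measure_mono
    intro ω hω
    simp only [Set.mem_setOf_eq] at *
    rw [hω]
    simp [Rch]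
  | succ k ih =>
    refine le_antisymm prob_le_one ?_
    have hE := X.stepAdm (m+1+k) (by omega)
    have h1 : P ({ω | X.G (m+1+k) ω ∈ Rch m k} ∩
        {ω | IsUAStep m (m+1+k) (X.G (m+1+k) ω) (X.G (m+1+k+1) ω)}) = 1 := by
      rw [meas_inter_one P (Rch_event_meas X k) hE]
      exact ih
    rw [← h1]
    apply measure_mono
    rintro ω ⟨h2, h3⟩
    simp only [Set.mem_setOf_eq] at *
    have hinv := inv_Rch hm k _ h2
    obtain ⟨hS, heq⟩ := step_char hinv.1 h3
    show X.G (m+1+(k+1)) ω ∈ Rch m (k+1)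
    rw [Rch, Finset.mem_biUnion]
    exact ⟨_, h2, Finset.mem_image.mpr ⟨_, hS, heq.symm⟩⟩

lemma sum_p (hm : 1 ≤ m) (X : UAProcess m P) (k : ℕ) :
    ∑ g ∈ Rch m k, P {ω | X.G (m+1+k) ω = g} = 1 := by
  rw [← measure_biUnion_finset ?_ (fun g _ => X.meas _ g)]
  · rw [← Rch_event_eq]; exact prob_Rch hm X k
  · intro g hg g' hg' hne
    rw [Function.onFun, Set.disjoint_left]
    intro ω h1 h2
    simp only [Set.mem_setOf_eq] at h1 h2
    exact hne (by rw [← h1, ← h2])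

lemma sum_P_biUnion (X : UAProcess m P) (N : ℕ) (s : Finset (SimpleGraph ℕ)) :
    P (⋃ g ∈ s, {ω | X.G N ω = g}) = ∑ g ∈ s, P {ω | X.G N ω = g} := by
  refine measure_biUnion_finset ?_ (fun g _ => X.meas _ g)
  intro g hg g' hg' hne
  rw [Function.onFun, Set.disjoint_left]
  intro ω h1 h2
  simp only [Set.mem_setOf_eq] at h1 h2
  exact hne (by rw [← h1, ← h2])

lemma trans_bound (hm : 1 ≤ m) (X : UAProcess m P) (k : ℕ) (g' : SimpleGraph ℕ) :
    P {ω | X.G (m+1+(k+1)) ω = g'} ≤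
      ∑ g ∈ Rch m k, ∑ S ∈ (Finset.powersetCard m (openFin m (m+1+k) g)).filter
          (fun S => addStar (m+1+k) g S = g'),
        P {ω | X.G (m+1+k) ω = g} / (numOpenSets m (m+1+k) g : ℝ≥0∞) := by
  set n := m+1+k with hn
  have hE := X.stepAdm n (by omega)
  have h1 : P {ω | X.G (n+1) ω = g'}
      = P (({ω | X.G (n+1) ω = g'} ∩ {ω | X.G n ω ∈ Rch m k})
          ∩ {ω | IsUAStep m n (X.G n ω) (X.G (n+1) ω)}) := by
    rw [meas_inter_one P ((X.meas (n+1) g').inter (Rch_event_meas X k)) hE]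
    rw [meas_inter_one P (X.meas (n+1) g') (prob_Rch hm X k)]
  rw [show (m+1+(k+1)) = n+1 from rfl, h1]
  calc P (({ω | X.G (n+1) ω = g'} ∩ {ω | X.G n ω ∈ Rch m k})
          ∩ {ω | IsUAStep m n (X.G n ω) (X.G (n+1) ω)})
      ≤ P (⋃ g ∈ Rch m k, ⋃ S ∈ (Finset.powersetCard m (openFin m n g)).filter
            (fun S => addStar n g S = g'),
          {ω | X.G n ω = g ∧ nbrsIn (X.G (n+1) ω) (n+1) (n+1) = S}) := by
        apply measure_mono
        rintro ω ⟨⟨hA, hXk⟩, hstep⟩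
        simp only [Set.mem_setOf_eq] at hA hXk hstep
        have hinv := inv_Rch hm k _ hXk
        obtain ⟨hS, heq⟩ := step_char hinv.1 hstep
        simp only [Set.mem_iUnion]
        exact ⟨_, hXk, _, Finset.mem_filter.mpr ⟨hS, by rw [← heq, hA]⟩, rfl, rfl⟩
    _ ≤ ∑ g ∈ Rch m k, P (⋃ S ∈ (Finset.powersetCard m (openFin m n g)).filter
            (fun S => addStar n g S = g'),
          {ω | X.G n ω = g ∧ nbrsIn (X.G (n+1) ω) (n+1) (n+1) = S}) :=
        measure_biUnion_finset_le _ _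
    _ ≤ ∑ g ∈ Rch m k, ∑ S ∈ (Finset.powersetCard m (openFin m n g)).filter
            (fun S => addStar n g S = g'),
          P {ω | X.G n ω = g ∧ nbrsIn (X.G (n+1) ω) (n+1) (n+1) = S} :=
        Finset.sum_le_sum (fun g _ => measure_biUnion_finset_le _ _)
    _ = _ := by
        apply Finset.sum_congr rfl
        intro g hg
        apply Finset.sum_congr rfl
        intro S hS
        have hinv := inv_Rch hm k g hg
        obtain ⟨hSsub, hScard⟩ := Finset.mem_powersetCard.mp (Finset.mem_filter.mp hS).1
        exact X.stepUnif n (by omega) g hinv.1 S hScard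
          (fun v hv => mem_openFin.mp (hSsub hv))

end MeasureLayer

section MainEst

variable {Ω : Type} [MeasurableSpace Ω] {m : ℕ} {P : Measure Ω} [IsProbabilityMeasure P]

lemma addStar_mem_Rch {k : ℕ} {g : SimpleGraph ℕ} (hg : g ∈ Rch m k) {S : Finset ℕ}
    (hS : S ∈ Finset.powersetCard m (openFin m (m+1+k) g)) :
    addStar (m+1+k) g S ∈ Rch m (k+1) := by
  rw [Rch, Finset.mem_biUnion]
  exact ⟨g, hg, Finset.mem_image.mpr ⟨S, hS, rfl⟩⟩

lemma sum_Rch_succ_le (hm : 1 ≤ m) (X : UAProcess m P) (k : ℕ) (F : SimpleGraph ℕ → ℝ≥0∞) :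
    ∑ g' ∈ Rch m (k+1), P {ω | X.G (m+1+(k+1)) ω = g'} * F g'
    ≤ ∑ g ∈ Rch m k, ∑ S ∈ Finset.powersetCard m (openFin m (m+1+k) g),
        (P {ω | X.G (m+1+k) ω = g} / (numOpenSets m (m+1+k) g : ℝ≥0∞))
          * F (addStar (m+1+k) g S) := by
  calc ∑ g' ∈ Rch m (k+1), P {ω | X.G (m+1+(k+1)) ω = g'} * F g'
      ≤ ∑ g' ∈ Rch m (k+1),
          (∑ g ∈ Rch m k, ∑ S ∈ (Finset.powersetCard m (openFin m (m+1+k) g)).filter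
            (fun S => addStar (m+1+k) g S = g'),
            P {ω | X.G (m+1+k) ω = g} / (numOpenSets m (m+1+k) g : ℝ≥0∞)) * F g' :=
        Finset.sum_le_sum (fun g' _ => mul_le_mul_left (trans_bound hm X k g') _)
    _ = ∑ g' ∈ Rch m (k+1), ∑ g ∈ Rch m k,
          ∑ S ∈ (Finset.powersetCard m (openFin m (m+1+k) g)).filter
            (fun S => addStar (m+1+k) g S = g'),
          (P {ω | X.G (m+1+k) ω = g} / (numOpenSets m (m+1+k) g : ℝ≥0∞)) * F g' := by
        simp only [Finset.sum_mul]
    _ = ∑ g ∈ Rch m k, ∑ g' ∈ Rch m (k+1),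
          ∑ S ∈ (Finset.powersetCard m (openFin m (m+1+k) g)).filter
            (fun S => addStar (m+1+k) g S = g'),
          (P {ω | X.G (m+1+k) ω = g} / (numOpenSets m (m+1+k) g : ℝ≥0∞)) * F g' :=
        Finset.sum_comm
    _ = ∑ g ∈ Rch m k, ∑ g' ∈ Rch m (k+1),
          ∑ S ∈ (Finset.powersetCard m (openFin m (m+1+k) g)).filter
            (fun S => addStar (m+1+k) g S = g'),
          (P {ω | X.G (m+1+k) ω = g} / (numOpenSets m (m+1+k) g : ℝ≥0∞))
            * F (addStar (m+1+k) g S) := by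
        refine Finset.sum_congr rfl (fun g _ => Finset.sum_congr rfl (fun g' _ =>
          Finset.sum_congr rfl (fun S hS => ?_)))
        rw [(Finset.mem_filter.mp hS).2]
    _ = _ := by
        refine Finset.sum_congr rfl (fun g hg => ?_)
        exact Finset.sum_fiberwise_of_maps_to (fun S hS => addStar_mem_Rch hg hS) _

lemma EE_step (hm : 1 ≤ m) (X : UAProcess m P) (n₀ k : ℕ) (hk : n₀ ≤ m+1+k) :
    (∑ g' ∈ Rch m (k+1),
        P {ω | X.G (m+1+(k+1)) ω = g'} * (fdef m n₀ (m+1+(k+1)) g' : ℝ≥0∞))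
      + (∑ g ∈ (Rch m k).filter (fun g => Qop m n₀ (m+1+k) g),
          P {ω | X.G (m+1+k) ω = g}) / ((m:ℝ≥0∞)+1)
    ≤ ∑ g ∈ Rch m k, P {ω | X.G (m+1+k) ω = g} * (fdef m n₀ (m+1+k) g : ℝ≥0∞) := by
  have hA := sum_Rch_succ_le hm X k (fun g' => (fdef m n₀ (m+1+(k+1)) g' : ℝ≥0∞))
  have hsplit : (∑ g ∈ (Rch m k).filter (fun g => Qop m n₀ (m+1+k) g),
      P {ω | X.G (m+1+k) ω = g}) / ((m:ℝ≥0∞)+1)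
      = ∑ g ∈ Rch m k, (if Qop m n₀ (m+1+k) g
          then P {ω | X.G (m+1+k) ω = g} / ((m:ℝ≥0∞)+1) else 0) := by
    rw [Finset.sum_filter, div_eq_mul_inv, Finset.sum_mul]
    exact Finset.sum_congr rfl (fun g _ => by split <;> simp [div_eq_mul_inv])
  refine le_trans (add_le_add hA hsplit.le) ?_
  simp only [show m+1+(k+1) = m+1+k+1 from rfl]
  rw [← Finset.sum_add_distrib]
  apply Finset.sum_le_sum
  intro g hg
  have hinv := inv_Rch hm k g hg
  set n := m+1+k with hn
  set p := P {ω | X.G n ω = g} with hp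
  have hptop : p ≠ ⊤ := measure_ne_top P _
  simp only [numOpenSets_eq]
  by_cases hQ : Qop m n₀ n g
  · simp only [if_pos hQ]
    obtain ⟨v₀, hv₀, hv₀deg⟩ := hQ
    have hv₀n : v₀ ∈ Finset.Icc 1 n := Icc_n₀_subset hk hv₀
    have hv₀open : v₀ ∈ openFin m n g := mem_openFin.mpr ⟨hv₀n, hv₀deg⟩
    obtain ⟨hK1, hK2⟩ := openFin_card_bounds hm hinv
    have hmK : m ≤ (openFin m n g).card := by omega
    have hC0 : ((openFin m n g).card).choose m ≠ 0 := (Nat.choose_pos hmK).ne'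
    have hC0' : (((openFin m n g).card.choose m : ℕ) : ℝ≥0∞) ≠ 0 := Nat.cast_ne_zero.mpr hC0
    have hCt : (((openFin m n g).card.choose m : ℕ) : ℝ≥0∞) ≠ ⊤ := ENNReal.natCast_ne_top _
    -- ℕ inequality
    have h1 : ∑ S ∈ Finset.powersetCard m (openFin m n g),
        (fdef m n₀ (n+1) (addStar n g S) + (if v₀ ∈ S then 1 else 0))
        ≤ ∑ S ∈ Finset.powersetCard m (openFin m n g), fdef m n₀ n g :=
      Finset.sum_le_sum (fun S hS => fdef_step hk hinv.1 hS hv₀)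
    rw [Finset.sum_const, Finset.card_powersetCard, smul_eq_mul, Finset.sum_add_distrib] at h1
    have h2 : (∑ S ∈ Finset.powersetCard m (openFin m n g),
        (if v₀ ∈ S then 1 else 0)) = ((openFin m n g).card - 1).choose (m-1) := by
      rw [Finset.sum_boole, Nat.cast_id, card_filter_mem_powersetCard hm _ hv₀open]
    rw [h2] at h1
    have hchoose : ((openFin m n g).card).choose m
        ≤ (m+1) * (((openFin m n g).card - 1).choose (m-1)) := choose_le hm hmK hK2
    -- ENNReal computation
    set C : ℝ≥0∞ := (((openFin m n g).card.choose m : ℕ) : ℝ≥0∞) with hC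
    set C' : ℕ := ((openFin m n g).card - 1).choose (m-1) with hC'
    have step1 : ∑ S ∈ Finset.powersetCard m (openFin m n g),
        (p / C) * (fdef m n₀ (n+1) (addStar n g S) : ℝ≥0∞)
        = (p / C) * ((∑ S ∈ Finset.powersetCard m (openFin m n g),
            fdef m n₀ (n+1) (addStar n g S) : ℕ) : ℝ≥0∞) := by
      rw [← Finset.mul_sum, Nat.cast_sum]
    have hm1 : ((m:ℝ≥0∞)+1) ≠ 0 := fun h => one_ne_zero (α := ℝ≥0∞) (add_eq_zero.mp h).2
    have hm1t : ((m:ℝ≥0∞)+1) ≠ ⊤ := by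
      simp [ENNReal.add_ne_top]
    have hpc : (p / C) * C = p := by
      rw [mul_comm]
      exact ENNReal.mul_div_cancel hC0' hCt
    have step2 : p / ((m:ℝ≥0∞)+1) ≤ (p / C) * (C' : ℝ≥0∞) := by
      rw [ENNReal.div_le_iff_le_mul (Or.inl hm1) (Or.inl hm1t)]
      have hcast : C ≤ (C' : ℝ≥0∞) * ((m:ℝ≥0∞)+1) := by
        rw [hC]
        calc (((openFin m n g).card.choose m : ℕ) : ℝ≥0∞)
            ≤ (((m+1) * C' : ℕ) : ℝ≥0∞) := Nat.cast_le.mpr hchoose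
          _ = (C' : ℝ≥0∞) * ((m:ℝ≥0∞)+1) := by push_cast; ring
      calc p = (p / C) * C := hpc.symm
        _ ≤ (p / C) * ((C' : ℝ≥0∞) * ((m:ℝ≥0∞)+1)) := mul_le_mul_right hcast _
        _ = (p / C) * (C' : ℝ≥0∞) * ((m:ℝ≥0∞)+1) := by ring
    calc (∑ S ∈ Finset.powersetCard m (openFin m n g),
          (p / C) * (fdef m n₀ (n+1) (addStar n g S) : ℝ≥0∞)) + p / ((m:ℝ≥0∞)+1)
        ≤ (p / C) * ((∑ S ∈ Finset.powersetCard m (openFin m n g),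
            fdef m n₀ (n+1) (addStar n g S) : ℕ) : ℝ≥0∞) + (p / C) * (C' : ℝ≥0∞) := by
          rw [step1]; exact add_le_add_right step2 _
      _ = (p / C) * (((∑ S ∈ Finset.powersetCard m (openFin m n g),
            fdef m n₀ (n+1) (addStar n g S)) + C' : ℕ) : ℝ≥0∞) := by
          rw [← mul_add, Nat.cast_add]
      _ ≤ (p / C) * ((((openFin m n g).card.choose m) * fdef m n₀ n g : ℕ) : ℝ≥0∞) :=
          mul_le_mul_right (Nat.cast_le.mpr h1) _
      _ = (p / C) * (C * (fdef m n₀ n g : ℝ≥0∞)) := by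
          rw [Nat.cast_mul, hC]
      _ = ((p / C) * C) * (fdef m n₀ n g : ℝ≥0∞) := by ring
      _ = p * (fdef m n₀ n g : ℝ≥0∞) := by rw [hpc]
  · simp only [if_neg hQ, add_zero]
    refine le_trans (le_of_eq (Finset.sum_eq_zero ?_)) zero_le
    intro S hS
    rw [fdef_closed_zero hk hinv hS hQ]
    simp

lemma q_step (hm : 1 ≤ m) (X : UAProcess m P) (n₀ k : ℕ) (hk : n₀ ≤ m+1+k) :
    ∑ g' ∈ (Rch m (k+1)).filter (fun g' => Qop m n₀ (m+1+(k+1)) g'),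
        P {ω | X.G (m+1+(k+1)) ω = g'}
    ≤ ∑ g ∈ (Rch m k).filter (fun g => Qop m n₀ (m+1+k) g),
        P {ω | X.G (m+1+k) ω = g} := by
  have hA := sum_Rch_succ_le hm X k
    (fun g' => if Qop m n₀ (m+1+(k+1)) g' then (1:ℝ≥0∞) else 0)
  have hL : ∑ g' ∈ (Rch m (k+1)).filter (fun g' => Qop m n₀ (m+1+(k+1)) g'),
      P {ω | X.G (m+1+(k+1)) ω = g'}
      = ∑ g' ∈ Rch m (k+1), P {ω | X.G (m+1+(k+1)) ω = g'}
          * (if Qop m n₀ (m+1+(k+1)) g' then (1:ℝ≥0∞) else 0) := by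
    rw [Finset.sum_filter]
    exact Finset.sum_congr rfl (fun g' _ => by split <;> simp)
  rw [hL]
  refine le_trans hA ?_
  simp only [show m+1+(k+1) = m+1+k+1 from rfl]
  rw [Finset.sum_filter]
  apply Finset.sum_le_sum
  intro g hg
  have hinv := inv_Rch hm k g hg
  set n := m+1+k with hn
  set p := P {ω | X.G n ω = g} with hp
  by_cases hQ : Qop m n₀ n g
  · simp only [if_pos hQ]
    obtain ⟨hK1, hK2⟩ := openFin_card_bounds hm hinv
    have hmK : m ≤ (openFin m n g).card := by omega
    have hC0' : ((numOpenSets m n g : ℕ) : ℝ≥0∞) ≠ 0 := by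
      rw [numOpenSets_eq]
      exact Nat.cast_ne_zero.mpr (Nat.choose_pos hmK).ne'
    have hCt : ((numOpenSets m n g : ℕ) : ℝ≥0∞) ≠ ⊤ := ENNReal.natCast_ne_top _
    calc ∑ S ∈ Finset.powersetCard m (openFin m n g),
          (p / (numOpenSets m n g : ℝ≥0∞))
            * (if Qop m n₀ (n+1) (addStar n g S) then (1:ℝ≥0∞) else 0)
        ≤ ∑ S ∈ Finset.powersetCard m (openFin m n g),
          (p / (numOpenSets m n g : ℝ≥0∞)) := by
          apply Finset.sum_le_sum
          intro S hS
          calc (p / (numOpenSets m n g : ℝ≥0∞))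
              * (if Qop m n₀ (n+1) (addStar n g S) then (1:ℝ≥0∞) else 0)
              ≤ (p / (numOpenSets m n g : ℝ≥0∞)) * 1 :=
                mul_le_mul_right (by split <;> simp) _
            _ = _ := mul_one _
      _ = ((openFin m n g).card.choose m) • (p / (numOpenSets m n g : ℝ≥0∞)) := by
          rw [Finset.sum_const, Finset.card_powersetCard]
      _ = ((numOpenSets m n g : ℕ) : ℝ≥0∞) * (p / (numOpenSets m n g : ℝ≥0∞)) := by
          rw [nsmul_eq_mul, numOpenSets_eq]
      _ = p := ENNReal.mul_div_cancel hC0' hCt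
  · refine le_trans (le_of_eq (Finset.sum_eq_zero ?_)) zero_le
    intro S hS
    rw [if_neg (fun h => hQ (Qop_back hk hinv.1 hS h)), mul_zero]

end MainEst

section Final

variable {Ω : Type} [MeasurableSpace Ω] {m : ℕ} {P : Measure Ω} [IsProbabilityMeasure P]

/-- abbreviation for the "open" mass -/
def qMass (X : UAProcess m P) (n₀ k : ℕ) : ℝ≥0∞ :=
  ∑ g ∈ (Rch m k).filter (fun g => Qop m n₀ (m+1+k) g), P {ω | X.G (m+1+k) ω = g}

def eMass (X : UAProcess m P) (n₀ k : ℕ) : ℝ≥0∞ :=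
  ∑ g ∈ Rch m k, P {ω | X.G (m+1+k) ω = g} * (fdef m n₀ (m+1+k) g : ℝ≥0∞)

lemma eMass_le (hm : 1 ≤ m) (X : UAProcess m P) (n₀ k : ℕ) :
    eMass X n₀ k ≤ ((n₀ * (2*m) : ℕ) : ℝ≥0∞) := by
  calc eMass X n₀ k
      ≤ ∑ g ∈ Rch m k, P {ω | X.G (m+1+k) ω = g} * ((n₀ * (2*m) : ℕ) : ℝ≥0∞) :=
        Finset.sum_le_sum (fun g _ =>
          mul_le_mul_right (Nat.cast_le.mpr (fdef_le m n₀ (m+1+k) g)) _)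
    _ = (∑ g ∈ Rch m k, P {ω | X.G (m+1+k) ω = g}) * ((n₀ * (2*m) : ℕ) : ℝ≥0∞) :=
        (Finset.sum_mul _ _ _).symm
    _ = ((n₀ * (2*m) : ℕ) : ℝ≥0∞) := by rw [sum_p hm X k, one_mul]

lemma qMass_mono (hm : 1 ≤ m) (X : UAProcess m P) (n₀ : ℕ) {j t : ℕ} (h : j ≤ t) :
    qMass X n₀ (n₀+t) ≤ qMass X n₀ (n₀+j) := by
  induction t with
  | zero => rw [Nat.le_zero.mp h]
  | succ t ih =>
    rcases Nat.lt_or_ge j (t+1) with hlt | hge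
    · have hj : j ≤ t := by omega
      calc qMass X n₀ (n₀+(t+1)) ≤ qMass X n₀ (n₀+t) := by
            rw [show n₀+(t+1) = (n₀+t)+1 from rfl]
            exact q_step hm X n₀ (n₀+t) (by omega)
        _ ≤ _ := ih hj
    · have hj : j = t+1 := by omega
      rw [hj]

lemma qMass_tele (hm : 1 ≤ m) (X : UAProcess m P) (n₀ : ℕ) (t : ℕ) :
    (∑ j ∈ Finset.range t, qMass X n₀ (n₀+j) / ((m:ℝ≥0∞)+1)) + eMass X n₀ (n₀+t)
      ≤ eMass X n₀ n₀ := by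
  induction t with
  | zero => simp
  | succ t ih =>
    rw [Finset.sum_range_succ]
    calc (∑ j ∈ Finset.range t, qMass X n₀ (n₀+j) / ((m:ℝ≥0∞)+1))
          + qMass X n₀ (n₀+t) / ((m:ℝ≥0∞)+1) + eMass X n₀ (n₀+(t+1))
        = (∑ j ∈ Finset.range t, qMass X n₀ (n₀+j) / ((m:ℝ≥0∞)+1))
          + (eMass X n₀ ((n₀+t)+1) + qMass X n₀ (n₀+t) / ((m:ℝ≥0∞)+1)) := by
          rw [show n₀+(t+1) = (n₀+t)+1 from rfl]; ring
      _ ≤ (∑ j ∈ Finset.range t, qMass X n₀ (n₀+j) / ((m:ℝ≥0∞)+1)) + eMass X n₀ (n₀+t) :=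
          add_le_add_right (EE_step hm X n₀ (n₀+t) (by omega)) _
      _ ≤ _ := ih

lemma qMass_tendsto (hm : 1 ≤ m) (X : UAProcess m P) (n₀ : ℕ) :
    Tendsto (fun t => qMass X n₀ (n₀+t)) atTop (𝓝 0) := by
  rw [ENNReal.tendsto_atTop_zero]
  intro ε hε
  by_cases hεtop : ε = ⊤
  · exact ⟨0, fun t _ => hεtop ▸ le_top⟩
  set B : ℝ≥0∞ := ((n₀ * (2*m) : ℕ) : ℝ≥0∞) with hB
  set A : ℝ≥0∞ := ((m:ℝ≥0∞)+1) * B with hA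
  have hAtop : A ≠ ⊤ := by
    rw [hA, hB]
    exact ENNReal.mul_ne_top (by simp [ENNReal.add_ne_top]) (ENNReal.natCast_ne_top _)
  have hdivtop : A / ε ≠ ⊤ := (ENNReal.div_lt_top hAtop hε.ne').ne
  obtain ⟨N, hN⟩ := ENNReal.exists_nat_gt hdivtop
  refine ⟨N+1, fun t ht => ?_⟩
  have ht0 : ((t:ℝ≥0∞)) ≠ 0 := Nat.cast_ne_zero.mpr (by omega)
  have httop : ((t:ℝ≥0∞)) ≠ ⊤ := ENNReal.natCast_ne_top _
  -- t • (q/(m+1)) ≤ B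
  have h1 : (t:ℝ≥0∞) * (qMass X n₀ (n₀+t) / ((m:ℝ≥0∞)+1)) ≤ B := by
    calc (t:ℝ≥0∞) * (qMass X n₀ (n₀+t) / ((m:ℝ≥0∞)+1))
        = (Finset.range t).card • (qMass X n₀ (n₀+t) / ((m:ℝ≥0∞)+1)) := by
          rw [Finset.card_range, nsmul_eq_mul]
      _ ≤ ∑ j ∈ Finset.range t, qMass X n₀ (n₀+j) / ((m:ℝ≥0∞)+1) :=
          Finset.card_nsmul_le_sum _ _ _ (fun j hj =>
            ENNReal.div_le_div_right
              (qMass_mono hm X n₀ (Finset.mem_range.mp hj).le) _)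
      _ ≤ eMass X n₀ n₀ := le_trans (le_add_right le_rfl) (qMass_tele hm X n₀ t)
      _ ≤ B := eMass_le hm X n₀ n₀
  -- deduce q ≤ A / t
  have hm1 : ((m:ℝ≥0∞)+1) ≠ 0 := fun h => one_ne_zero (α := ℝ≥0∞) (add_eq_zero.mp h).2
  have hm1t : ((m:ℝ≥0∞)+1) ≠ ⊤ := by simp [ENNReal.add_ne_top]
  have h2 : qMass X n₀ (n₀+t) ≤ A / (t:ℝ≥0∞) := by
    have hq : qMass X n₀ (n₀+t) = (qMass X n₀ (n₀+t) / ((m:ℝ≥0∞)+1)) * ((m:ℝ≥0∞)+1) :=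
      (ENNReal.div_mul_cancel hm1 hm1t).symm
    have h3 : qMass X n₀ (n₀+t) / ((m:ℝ≥0∞)+1) ≤ B / (t:ℝ≥0∞) := by
      rw [ENNReal.le_div_iff_mul_le (Or.inl ht0) (Or.inl httop)]
      rw [mul_comm] at h1
      exact h1
    calc qMass X n₀ (n₀+t) = (qMass X n₀ (n₀+t) / ((m:ℝ≥0∞)+1)) * ((m:ℝ≥0∞)+1) := hq
      _ ≤ (B / (t:ℝ≥0∞)) * ((m:ℝ≥0∞)+1) := mul_le_mul_left h3 _
      _ = A / (t:ℝ≥0∞) := by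
          rw [hA, div_eq_mul_inv, div_eq_mul_inv]; ring
  -- A / t ≤ ε
  refine le_trans h2 ?_
  rw [ENNReal.div_le_iff_le_mul (Or.inl ht0) (Or.inl httop)]
  have h4 : A < (N:ℝ≥0∞) * ε := by
    exact (ENNReal.div_lt_iff (Or.inl hε.ne') (Or.inl hεtop)).mp hN
  calc A ≤ (N:ℝ≥0∞) * ε := h4.le
    _ ≤ (t:ℝ≥0∞) * ε := mul_le_mul_left (Nat.cast_le.mpr (by omega)) _
    _ = ε * (t:ℝ≥0∞) := mul_comm _ _

end Final

/-- For every integer `m > 1` and every `n₀ ∈ ℕ`, in the random uniform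
attachment graph process with degree cap `d = 2m`, the probability that every vertex of
`{1,…,n₀}` has degree exactly `2m` in `G n` tends to `1` as `n → ∞`. -/
theorem uniform_attachment_initial_segment_closed
    (m : ℕ) (hm : 1 < m) (n₀ : ℕ)
    {Ω : Type} [MeasurableSpace Ω] (P : Measure Ω) [IsProbabilityMeasure P]
    (X : UAProcess m P) :
    Tendsto (fun n => P {ω | ∀ v ∈ Finset.Icc 1 n₀, degIn (X.G n ω) n v = 2*m})
      atTop (𝓝 1) := by
  have hm1 : 1 ≤ m := hm.le
  have key : Tendsto (fun t => P {ω | ∀ v ∈ Finset.Icc 1 n₀,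
      degIn (X.G (m+1+(n₀+t)) ω) (m+1+(n₀+t)) v = 2*m}) atTop (𝓝 1) := by
    have hlow : ∀ t, (1 : ℝ≥0∞) - qMass X n₀ (n₀+t)
        ≤ P {ω | ∀ v ∈ Finset.Icc 1 n₀,
            degIn (X.G (m+1+(n₀+t)) ω) (m+1+(n₀+t)) v = 2*m} := by
      intro t
      have hsum : qMass X n₀ (n₀+t)
          + (∑ g ∈ (Rch m (n₀+t)).filter (fun g => ¬ Qop m n₀ (m+1+(n₀+t)) g),
              P {ω | X.G (m+1+(n₀+t)) ω = g}) = 1 := by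
        rw [qMass, Finset.sum_filter_add_sum_filter_not]
        exact sum_p hm1 X (n₀+t)
      have hx : (1:ℝ≥0∞) - qMass X n₀ (n₀+t)
          ≤ ∑ g ∈ (Rch m (n₀+t)).filter (fun g => ¬ Qop m n₀ (m+1+(n₀+t)) g),
              P {ω | X.G (m+1+(n₀+t)) ω = g} := by
        rw [tsub_le_iff_right]
        rw [add_comm] at hsum
        exact hsum.ge
      refine le_trans hx ?_
      rw [← sum_P_biUnion X (m+1+(n₀+t)) _]
      apply measure_mono
      intro ω hω
      simp only [Set.mem_iUnion, Set.mem_setOf_eq] at hω ⊢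
      obtain ⟨g, hgmem, hgeq⟩ := hω
      obtain ⟨hgR, hgQ⟩ := Finset.mem_filter.mp hgmem
      intro v hv
      have hinv := inv_Rch hm1 (n₀+t) g hgR
      have hvIcc : v ∈ Finset.Icc 1 (m+1+(n₀+t)) := Icc_n₀_subset (by omega) hv
      have h2 := (hinv.2.1 v hvIcc).2
      have h3 : ¬ degIn g (m+1+(n₀+t)) v < 2*m := fun hlt => hgQ ⟨v, hv, hlt⟩
      rw [hgeq]
      omega
    have hq0 := qMass_tendsto hm1 X n₀
    have hlim : Tendsto (fun t => (1:ℝ≥0∞) - qMass X n₀ (n₀+t)) atTop (𝓝 1) := by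
      have := ENNReal.Tendsto.sub (tendsto_const_nhds (x := (1:ℝ≥0∞))) hq0
        (Or.inl ENNReal.one_ne_top)
      simpa using this
    exact tendsto_of_tendsto_of_tendsto_of_le_of_le hlim tendsto_const_nhds hlow
      (fun t => prob_le_one)
  rw [← tendsto_add_atTop_iff_nat (m+1+n₀)]
  have hidx : ∀ t : ℕ, t + (m+1+n₀) = m+1+(n₀+t) := fun t => by omega
  simp only [hidx]
  exact key
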